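/- Let $w: \mathbb{R}^n \to [0,\infty)$ be locally integrable and let $M$ denote the Hardy--Littlewood maximal operator. Then for every $f \in L^1(Mw\, dx)$ and every $\lambda > 0$, $\int_{\{Mf > \lambda\}} w\, dx \leq \frac{C_n}{\lambda} \int_{\mathbb{R}^n} |f| \, Mw \, dx$, with $C_n$ depending only on the dimension $n$. -/

import Mathlib

open MeasureTheory
open scoped ENNReal

/-- The cube with center `c` and half side length `r`. -/
def centeredCube (n : ℕ) (c : Fin n → ℝ) (r : ℝ) : Set (Fin n → ℝ) :=
  {y | ∀ i, |y i - c i| ≤ r}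

/-- The Hardy–Littlewood maximal operator over cubes,
`Mf(x) = sup_{x ∈ I} |I|⁻¹ ∫_I |f|`. -/
noncomputable def maxOp (n : ℕ) (f : (Fin n → ℝ) → ℝ) (x : Fin n → ℝ) : ℝ≥0∞ :=
  ⨆ (c : Fin n → ℝ) (r : ℝ) (_ : 0 < r) (_ : x ∈ centeredCube n c r),
    (∫⁻ y in centeredCube n c r, ENNReal.ofReal |f y|) / volume (centeredCube n c r)

lemma cube_eq_closedBall {n : ℕ} (c : Fin n → ℝ) {r : ℝ} (hr : 0 ≤ r) :
    centeredCube n c r = Metric.closedBall c r := by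
  ext y
  simp only [centeredCube, Set.mem_setOf_eq, Metric.mem_closedBall, dist_pi_le_iff hr,
    Real.dist_eq]

lemma cube_vol {n : ℕ} (c : Fin n → ℝ) {r : ℝ} (hr : 0 ≤ r) :
    volume (centeredCube n c r) = ENNReal.ofReal ((2 * r) ^ n) := by
  rw [cube_eq_closedBall c hr, Real.volume_pi_closedBall c hr, Fintype.card_fin]

lemma cube_vol_pos {n : ℕ} (c : Fin n → ℝ) {r : ℝ} (hr : 0 < r) :
    0 < volume (centeredCube n c r) := by
  rw [cube_vol c hr.le]
  exact ENNReal.ofReal_pos.2 (by positivity)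

lemma cube_vol_ne_top {n : ℕ} (c : Fin n → ℝ) {r : ℝ} (hr : 0 ≤ r) :
    volume (centeredCube n c r) ≠ ⊤ := by
  rw [cube_vol c hr]; exact ENNReal.ofReal_ne_top

lemma cube_mono {n : ℕ} (c : Fin n → ℝ) {r r' : ℝ} (h : r ≤ r') :
    centeredCube n c r ⊆ centeredCube n c r' :=
  fun _ hy i => (hy i).trans h

lemma cube_measurableSet {n : ℕ} (c : Fin n → ℝ) {r : ℝ} (hr : 0 ≤ r) :
    MeasurableSet (centeredCube n c r) := by
  rw [cube_eq_closedBall c hr]; exact measurableSet_closedBall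

lemma le_maxOp {n : ℕ} {g : (Fin n → ℝ) → ℝ} {x c : Fin n → ℝ} {r : ℝ} (hr : 0 < r)
    (hx : x ∈ centeredCube n c r) :
    (∫⁻ y in centeredCube n c r, ENNReal.ofReal |g y|) / volume (centeredCube n c r)
      ≤ maxOp n g x :=
  le_iSup_of_le c <| le_iSup_of_le r <| le_iSup_of_le hr <| le_iSup_of_le hx le_rfl

lemma maxOp_mono {n : ℕ} {g h : (Fin n → ℝ) → ℝ} (hgh : ∀ y, |g y| ≤ |h y|)
    (x : Fin n → ℝ) : maxOp n g x ≤ maxOp n h x := by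
  refine iSup_mono fun c => iSup_mono fun r => iSup_mono fun hr => iSup_mono fun hx => ?_
  exact ENNReal.div_le_div_right
    (lintegral_mono fun y => ENNReal.ofReal_le_ofReal (hgh y)) _

/-- The Fefferman–Stein weighted weak type (1,1) inequality for the
Hardy–Littlewood maximal operator. -/
theorem stmt_7 (n : ℕ) :
    ∃ C : ℝ, 0 < C ∧
      ∀ (w : (Fin n → ℝ) → ℝ), (∀ x, 0 ≤ w x) → LocallyIntegrable w →
        ∀ (f : (Fin n → ℝ) → ℝ), Measurable f →
          (∫⁻ x, ENNReal.ofReal |f x| * maxOp n w x) < ⊤ →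
          ∀ (lam : ℝ), 0 < lam →
            (∫⁻ x in {x | ENNReal.ofReal lam < maxOp n f x}, ENNReal.ofReal (w x)) ≤
              ENNReal.ofReal (C / lam) * ∫⁻ x, ENNReal.ofReal |f x| * maxOp n w x := by
  refine ⟨4 ^ n, by positivity, ?_⟩
  intro w hw0 hwint f hf hfin lam hlam
  set lam' := ENNReal.ofReal lam with hlam'def
  have hlam'0 : lam' ≠ 0 := by
    simp only [hlam'def, ne_eq, ENNReal.ofReal_eq_zero, not_le]; exact hlam
  have hlam't : lam' ≠ ⊤ := ENNReal.ofReal_ne_top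
  set G : (Fin n → ℝ) → ℝ≥0∞ := fun y => ENNReal.ofReal |f y| * maxOp n w y with hGdef
  set A := ∫⁻ x, G x with hAdef
  have habs : ∀ y, ENNReal.ofReal |w y| = ENNReal.ofReal (w y) := fun y => by
    rw [abs_of_nonneg (hw0 y)]
  set μw := volume.withDensity (fun y => ENNReal.ofReal (w y)) with hμwdef
  have hμw_apply : ∀ s : Set (Fin n → ℝ), μw s = ∫⁻ y in s, ENNReal.ofReal (w y) :=
    fun s => withDensity_apply' _ s
  -- finiteness of the w-integral over cubes
  have hwfin : ∀ (c : Fin n → ℝ) (r : ℝ),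
      (∫⁻ y in centeredCube n c r, ENNReal.ofReal (w y)) ≠ ⊤ := by
    intro c r
    have hmax : (0 : ℝ) ≤ max r 1 := le_trans zero_le_one (le_max_right _ _)
    have hK : IsCompact (centeredCube n c (max r 1)) := by
      rw [cube_eq_closedBall c hmax]; exact isCompact_closedBall _ _
    have hint := (hwint.integrableOn_isCompact hK).2
    rw [hasFiniteIntegral_def] at hint
    have hle : (∫⁻ y in centeredCube n c r, ENNReal.ofReal (w y)) ≤
        ∫⁻ y in centeredCube n c (max r 1), (‖w y‖₊ : ℝ≥0∞) := by
      refine le_trans (lintegral_mono_set (cube_mono c (le_max_left r 1))) ?_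
      exact lintegral_mono fun y => Real.ofReal_le_enorm _
    exact (lt_of_le_of_lt hle hint).ne
  -- trivial case: w vanishes a.e.
  by_cases hWall : ∀ R : ℝ, 0 < R →
      (∫⁻ y in centeredCube n 0 R, ENNReal.ofReal (w y)) = 0
  · have huniv : μw Set.univ = 0 := by
      have hU : (Set.univ : Set (Fin n → ℝ)) = ⋃ m : ℕ, centeredCube n 0 ((m : ℝ) + 1) := by
        refine (Set.eq_univ_iff_forall.2 fun y => ?_).symm
        refine Set.mem_iUnion.2 ⟨⌈‖y‖⌉₊, fun i => ?_⟩
        simp only [Pi.zero_apply, sub_zero]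
        calc |y i| ≤ ‖y‖ := by rw [← Real.norm_eq_abs]; exact norm_le_pi_norm y i
          _ ≤ ⌈‖y‖⌉₊ := Nat.le_ceil _
          _ ≤ (⌈‖y‖⌉₊ : ℝ) + 1 := by linarith
      rw [hU]
      refine le_antisymm (le_trans (measure_iUnion_le _) ?_) zero_le
      have : ∀ m : ℕ, μw (centeredCube n 0 ((m : ℝ) + 1)) = 0 := fun m => by
        rw [hμw_apply]; exact hWall _ (by positivity)
      simp [this]
    have hle : (∫⁻ x in {x | lam' < maxOp n f x}, ENNReal.ofReal (w x)) ≤ μw Set.univ := by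
      rw [← hμw_apply]; exact measure_mono (Set.subset_univ _)
    rw [huniv] at hle
    exact le_trans hle zero_le
  push_neg at hWall
  obtain ⟨R0, hR0pos, hR0⟩ := hWall
  -- lower bound for the maximal function of w on cubes around the origin
  have hMw_lower : ∀ k : ℝ, 0 < k → ∃ c0 : ℝ≥0∞, 0 < c0 ∧ c0 ≠ ⊤ ∧
      ∀ y ∈ centeredCube n 0 k, c0 ≤ maxOp n w y := by
    intro k hk
    set R := max R0 k with hRdef
    have hRpos : 0 < R := lt_of_lt_of_le hR0pos (le_max_left _ _)
    refine ⟨(∫⁻ y in centeredCube n 0 R0, ENNReal.ofReal (w y)) /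
        volume (centeredCube n 0 R), ?_, ?_, ?_⟩
    · exact ENNReal.div_pos hR0 (cube_vol_ne_top _ hRpos.le)
    · exact (ENNReal.div_lt_top (hwfin _ _) (cube_vol_pos _ hRpos).ne').ne
    · intro y hy
      have hyR : y ∈ centeredCube n 0 R := cube_mono _ (le_max_right _ _) hy
      refine le_trans ?_ (le_maxOp hRpos hyR)
      refine ENNReal.div_le_div_right ?_ _
      calc (∫⁻ z in centeredCube n 0 R0, ENNReal.ofReal (w z))
          ≤ ∫⁻ z in centeredCube n 0 R, ENNReal.ofReal (w z) := by
            rw [hRdef]; exact lintegral_mono_set (cube_mono _ (le_max_left _ _))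
        _ = ∫⁻ z in centeredCube n 0 R, ENNReal.ofReal |w z| :=
            lintegral_congr fun z => (habs z).symm
  -- truncations of f
  set B : ℕ → Set (Fin n → ℝ) := fun k => centeredCube n 0 ((k : ℝ) + 1) with hBdef
  set fk : ℕ → (Fin n → ℝ) → ℝ := fun k => (B k).indicator f with hfkdef
  have hfk_abs : ∀ k y, ENNReal.ofReal |fk k y| =
      (B k).indicator (fun y => ENNReal.ofReal |f y|) y := by
    intro k y
    by_cases hy : y ∈ B k <;>
      simp [hfkdef, Set.indicator_of_mem, Set.indicator_of_notMem, hy]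
  have hfk_le : ∀ k y, |fk k y| ≤ |f y| := by
    intro k y
    by_cases hy : y ∈ B k <;>
      simp [hfkdef, Set.indicator_of_mem, Set.indicator_of_notMem, hy, abs_nonneg]
  have hBmono : ∀ k : ℕ, B k ⊆ B (k + 1) := by
    intro k
    refine cube_mono _ ?_
    push_cast; linarith
  have hfk_mono : ∀ k y, |fk k y| ≤ |fk (k + 1) y| := by
    intro k y
    by_cases hy : y ∈ B k
    · have hy' : y ∈ B (k + 1) := hBmono k hy
      simp [hfkdef, Set.indicator_of_mem, hy, hy']
    · simp [hfkdef, Set.indicator_of_notMem, hy, abs_nonneg]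
  set Ek : ℕ → Set (Fin n → ℝ) := fun k => {x | lam' < maxOp n (fk k) x} with hEkdef
  -- the superlevel set of f is covered by those of the truncations
  have hEsub : {x | lam' < maxOp n f x} ⊆ ⋃ k, Ek k := by
    intro x hx
    simp only [Set.mem_setOf_eq, maxOp, lt_iSup_iff] at hx
    obtain ⟨c, r, hr, hxc, hlt⟩ := hx
    have key : (∫⁻ y in centeredCube n c r, ENNReal.ofReal |f y|)
        = ⨆ k, ∫⁻ y in centeredCube n c r, ENNReal.ofReal |fk k y| := by
      simp only [hfk_abs]
      rw [← lintegral_iSup]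
      · refine lintegral_congr fun y => ?_
        refine le_antisymm ?_ (iSup_le fun k => Set.indicator_le_self _ _ _)
        refine le_iSup_of_le ⌈‖y‖⌉₊ (le_of_eq ?_)
        rw [Set.indicator_of_mem]
        intro i
        simp only [Pi.zero_apply, sub_zero]
        calc |y i| ≤ ‖y‖ := by rw [← Real.norm_eq_abs]; exact norm_le_pi_norm y i
          _ ≤ ⌈‖y‖⌉₊ := Nat.le_ceil _
          _ ≤ (⌈‖y‖⌉₊ : ℝ) + 1 := by linarith
      · intro k
        exact ((ENNReal.measurable_ofReal.comp hf.abs).indicator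
          (cube_measurableSet _ (by positivity)))
      · intro k l hkl y
        have hsub : B k ⊆ B l := by
          refine cube_mono _ ?_
          have : (k : ℝ) ≤ l := by exact_mod_cast hkl
          linarith
        exact Set.indicator_le_indicator_of_subset hsub (fun _ => zero_le) y
    rw [key, ENNReal.iSup_div, lt_iSup_iff] at hlt
    obtain ⟨k, hk⟩ := hlt
    exact Set.mem_iUnion.2 ⟨k, lt_of_lt_of_le hk (le_maxOp hr hxc)⟩
  have hEk_mono : Monotone Ek := by
    refine monotone_nat_of_le_succ fun k x hx => ?_
    exact lt_of_lt_of_le hx (maxOp_mono (hfk_mono k) x)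
  -- the main per-truncation estimate
  have hmain : ∀ k : ℕ, μw (Ek k) ≤ ENNReal.ofReal ((4 : ℝ) ^ n / lam) * A := by
    intro k
    obtain ⟨c0, hc0, hc0t, hc0le⟩ := hMw_lower ((k : ℝ) + 1) (by positivity)
    set X := ∫⁻ y, ENNReal.ofReal |fk k y| with hXdef
    have hXfin : X ≠ ⊤ := by
      have h1 : c0 * X ≤ A := by
        rw [hXdef, ← lintegral_const_mul' _ _ hc0t]
        refine lintegral_mono fun y => ?_
        by_cases hy : y ∈ B k
        · rw [hfk_abs, Set.indicator_of_mem hy, hGdef]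
          calc c0 * ENNReal.ofReal |f y| ≤ maxOp n w y * ENNReal.ofReal |f y| :=
              mul_le_mul_left (hc0le y hy) _
            _ = ENNReal.ofReal |f y| * maxOp n w y := mul_comm _ _
        · rw [hfk_abs, Set.indicator_of_notMem hy]
          simp
      intro hX
      rw [hX, ENNReal.mul_top hc0.ne'] at h1
      exact (lt_irrefl ⊤ (lt_of_le_of_lt h1 hfin))
    set Rb : ℝ := max 1 ((X / lam').toReal) with hRbdef
    -- choose a good cube for every point of `Ek k`
    have hcube : ∀ a ∈ Ek k, ∃ (c : Fin n → ℝ) (r : ℝ), 0 < r ∧ r ≤ Rb ∧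
        a ∈ centeredCube n c r ∧
        lam' * volume (centeredCube n c r) <
          ∫⁻ y in centeredCube n c r, ENNReal.ofReal |fk k y| := by
      intro a ha
      simp only [hEkdef, Set.mem_setOf_eq, maxOp, lt_iSup_iff] at ha
      obtain ⟨c, r, hr, hac, hlt⟩ := ha
      have hlt' : lam' * volume (centeredCube n c r) <
          ∫⁻ y in centeredCube n c r, ENNReal.ofReal |fk k y| := by
        rw [← ENNReal.lt_div_iff_mul_lt (Or.inl (cube_vol_pos c hr).ne')
          (Or.inl (cube_vol_ne_top c hr.le))]
        exact hlt
      by_cases hn : n = 0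
      · refine ⟨c, 1, one_pos, le_max_left _ _, ?_, ?_⟩
        · intro i; exact absurd (hn ▸ i : Fin 0).isLt (by simp)
        · have hQ : centeredCube n c 1 = centeredCube n c r := by
            ext y
            constructor <;> intro _ i <;> exact absurd (hn ▸ i : Fin 0).isLt (by simp)
          rw [hQ]; exact hlt'
      · refine ⟨c, r, hr, ?_, hac, hlt'⟩
        rcases le_or_gt r 1 with h1 | h1
        · exact le_trans h1 (le_max_left _ _)
        · have hXle : lam' * ENNReal.ofReal (2 * r) ≤ X := by
            calc lam' * ENNReal.ofReal (2 * r)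
                ≤ lam' * ENNReal.ofReal ((2 * r) ^ n) := by
                  refine mul_le_mul_right (ENNReal.ofReal_le_ofReal ?_) _
                  exact le_self_pow₀ (by linarith) hn
              _ = lam' * volume (centeredCube n c r) := by rw [cube_vol c hr.le]
              _ ≤ ∫⁻ y in centeredCube n c r, ENNReal.ofReal |fk k y| := hlt'.le
              _ ≤ X := setLIntegral_le_lintegral _ _
          have hdivfin : X / lam' ≠ ⊤ := (ENNReal.div_lt_top hXfin hlam'0).ne
          have h2r : ENNReal.ofReal (2 * r) ≤ X / lam' := by
            rw [ENNReal.le_div_iff_mul_le (Or.inl hlam'0) (Or.inl hlam't), mul_comm]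
            exact hXle
          have h2r' : 2 * r ≤ (X / lam').toReal :=
            (ENNReal.ofReal_le_iff_le_toReal hdivfin).1 h2r
          refine le_trans ?_ (le_max_right 1 ((X / lam').toReal))
          linarith
    choose! cf rf hrpos hrle hmem hcubelt using hcube
    -- Vitali covering lemma
    obtain ⟨u, hut, hdisj, hcov⟩ :=
      Vitali.exists_disjoint_subfamily_covering_enlargement_closedBall (Ek k) cf rf Rb
        (fun a ha => hrle a ha) 4 (by norm_num)
    have hdisj' : Pairwise (Function.onFun Disjoint
        fun b : u => Metric.closedBall (cf b) (rf b)) := by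
      intro i j hij
      exact hdisj i.2 j.2 (fun h => hij (Subtype.coe_injective h))
    haveI hcnt : Countable ↥u := by
      have hcnt' := MeasureTheory.Measure.countable_meas_pos_of_disjoint_iUnion
        (μ := (volume : Measure (Fin n → ℝ)))
        (As := fun b : u => Metric.closedBall (cf b) (rf b))
        (fun _ => measurableSet_closedBall) hdisj'
      have : {i : ↥u | 0 < volume (Metric.closedBall (cf i) (rf i))} = Set.univ := by
        refine Set.eq_univ_iff_forall.2 fun b => ?_
        have hb : (b : Fin n → ℝ) ∈ Ek k := hut b.2
        show 0 < volume (Metric.closedBall (cf b) (rf b))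
        rw [← cube_eq_closedBall _ (hrpos b hb).le]
        exact cube_vol_pos _ (hrpos b hb)
      rw [this] at hcnt'
      exact Set.countable_univ_iff.1 hcnt'
    have hcover : Ek k ⊆ ⋃ b : u, Metric.closedBall (cf b) (4 * rf b) := by
      intro a ha
      obtain ⟨b, hbu, hsub⟩ := hcov a ha
      have hmem' : a ∈ Metric.closedBall (cf a) (rf a) := by
        rw [← cube_eq_closedBall _ (hrpos a ha).le]; exact hmem a ha
      exact Set.mem_iUnion.2 ⟨⟨b, hbu⟩, hsub hmem'⟩
    -- per-ball estimate
    have hball : ∀ b : u, μw (Metric.closedBall (cf b) (4 * rf b)) ≤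
        ENNReal.ofReal ((4 : ℝ) ^ n / lam) *
          ∫⁻ y in Metric.closedBall (cf b) (rf b), G y := by
      intro b
      have hb : (b : Fin n → ℝ) ∈ Ek k := hut b.2
      set c := cf b
      set r := rf b with hrdef
      have hr : 0 < r := hrpos b hb
      have hr4 : 0 < 4 * r := by linarith
      set Q1 := centeredCube n c r with hQ1def
      set Q4 := centeredCube n c (4 * r) with hQ4def
      have hQ14 : Q1 ⊆ Q4 := cube_mono c (by linarith)
      set V1 := volume Q1 with hV1def
      set V4 := volume Q4 with hV4def
      have hV1pos : V1 ≠ 0 := (cube_vol_pos c hr).ne'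
      have hV1top : V1 ≠ ⊤ := cube_vol_ne_top c hr.le
      have hV4pos : V4 ≠ 0 := (cube_vol_pos c hr4).ne'
      have hV4top : V4 ≠ ⊤ := cube_vol_ne_top c hr4.le
      set S := μw Q4 with hSdef
      have hStop : S ≠ ⊤ := by rw [hSdef, hμw_apply]; exact hwfin _ _
      have hV41 : V4 = ENNReal.ofReal ((4 : ℝ) ^ n) * V1 := by
        rw [hV4def, hV1def, cube_vol c hr4.le, cube_vol c hr.le,
          ← ENNReal.ofReal_mul (by positivity)]
        congr 1
        rw [← mul_pow]
        ring_nf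
      have hS4 : ∀ y ∈ Q1, S ≤ maxOp n w y * V4 := by
        intro y hy
        have hy4 : y ∈ Q4 := hQ14 hy
        have h1 := le_maxOp (g := w) hr4 hy4
        have h2 : (∫⁻ z in Q4, ENNReal.ofReal |w z|) = S := by
          rw [hSdef, hμw_apply]
          exact lintegral_congr fun z => habs z
        rw [h2] at h1
        exact (ENNReal.div_le_iff_le_mul (Or.inl hV4pos) (Or.inl hV4top)).1 h1
      have hkey : (∫⁻ y in Q1, ENNReal.ofReal |fk k y|) * S ≤
          (∫⁻ y in Q1, G y) * V4 := by
        rw [← lintegral_mul_const' _ _ hStop, ← lintegral_mul_const' _ _ hV4top]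
        refine lintegral_mono_ae ((ae_restrict_mem (cube_measurableSet c hr.le)).mono
          fun y hy => ?_)
        calc ENNReal.ofReal |fk k y| * S
            ≤ ENNReal.ofReal |f y| * (maxOp n w y * V4) :=
              mul_le_mul' (ENNReal.ofReal_le_ofReal (hfk_le k y)) (hS4 y hy)
          _ = G y * V4 := by rw [hGdef, mul_assoc]
      have hlow : lam' * V1 * S ≤ (∫⁻ y in Q1, ENNReal.ofReal |fk k y|) * S :=
        mul_le_mul_left (hcubelt b hb).le S
      have hfinal : lam' * S ≤ ENNReal.ofReal ((4 : ℝ) ^ n) * ∫⁻ y in Q1, G y := by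
        have h3 : lam' * V1 * S ≤ (∫⁻ y in Q1, G y) * (ENNReal.ofReal ((4 : ℝ) ^ n) * V1) := by
          rw [← hV41]; exact le_trans hlow hkey
        have h4 : (lam' * S) * V1 ≤ (ENNReal.ofReal ((4 : ℝ) ^ n) * ∫⁻ y in Q1, G y) * V1 := by
          calc (lam' * S) * V1 = lam' * V1 * S := by ring
            _ ≤ (∫⁻ y in Q1, G y) * (ENNReal.ofReal ((4 : ℝ) ^ n) * V1) := h3
            _ = (ENNReal.ofReal ((4 : ℝ) ^ n) * ∫⁻ y in Q1, G y) * V1 := by ring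
        exact (ENNReal.mul_le_mul_iff_left hV1pos hV1top).1 h4
      have hgoal : μw (Metric.closedBall c (4 * r)) = S := by
        rw [hSdef, hQ4def, cube_eq_closedBall c hr4.le]
      rw [hgoal]
      have hQ1cb : Metric.closedBall c r = Q1 := (cube_eq_closedBall c hr.le).symm
      rw [hQ1cb]
      calc S = lam'⁻¹ * (lam' * S) := by
            rw [← mul_assoc, ENNReal.inv_mul_cancel hlam'0 hlam't, one_mul]
        _ ≤ lam'⁻¹ * (ENNReal.ofReal ((4 : ℝ) ^ n) * ∫⁻ y in Q1, G y) :=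
            mul_le_mul_right hfinal _
        _ = ENNReal.ofReal ((4 : ℝ) ^ n / lam) * ∫⁻ y in Q1, G y := by
            rw [ENNReal.ofReal_div_of_pos hlam, div_eq_mul_inv, ← hlam'def,
              ← mul_assoc, mul_comm lam'⁻¹]
    -- sum up
    have hsum3 : ∑' b : u, ∫⁻ y in Metric.closedBall (cf b) (rf b), G y ≤ A := by
      rw [← lintegral_iUnion (fun _ => measurableSet_closedBall) hdisj']
      exact setLIntegral_le_lintegral _ _
    calc μw (Ek k) ≤ μw (⋃ b : u, Metric.closedBall (cf b) (4 * rf b)) :=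
          measure_mono hcover
      _ ≤ ∑' b : u, μw (Metric.closedBall (cf b) (4 * rf b)) := measure_iUnion_le _
      _ ≤ ∑' b : u, ENNReal.ofReal ((4 : ℝ) ^ n / lam) *
            ∫⁻ y in Metric.closedBall (cf b) (rf b), G y := ENNReal.tsum_le_tsum hball
      _ = ENNReal.ofReal ((4 : ℝ) ^ n / lam) *
            ∑' b : u, ∫⁻ y in Metric.closedBall (cf b) (rf b), G y :=
          ENNReal.tsum_mul_left
      _ ≤ ENNReal.ofReal ((4 : ℝ) ^ n / lam) * A := mul_le_mul_right hsum3 _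
  -- conclude
  calc (∫⁻ x in {x | lam' < maxOp n f x}, ENNReal.ofReal (w x))
      = μw {x | lam' < maxOp n f x} := (hμw_apply _).symm
    _ ≤ μw (⋃ k, Ek k) := measure_mono hEsub
    _ = ⨆ k, μw (Ek k) := hEk_mono.measure_iUnion
    _ ≤ ENNReal.ofReal ((4 : ℝ) ^ n / lam) * A := iSup_le hmain
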